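/- Let $1 < p < \infty$ and let $\sigma$ be a nonnegative Radon measure on $\mathbb{R}^n$. Then the Wolff potential satisfies the weak maximum principle: $\mathbf{W}_{1,p}\sigma(x) \leq c\, \sup_{\operatorname{supp}\sigma} \mathbf{W}_{1,p}\sigma$ for all $x \in \mathbb{R}^n$, where $c = c(n,p) > 0$. Moreover, by lower semicontinuity of $\mathbf{W}_{1,p}\sigma$, one has $\sup_{\operatorname{supp}\sigma}\mathbf{W}_{1,p}\sigma = \|\mathbf{W}_{1,p}\sigma\|_{L^\infty(\mathbb{R}^n, d\sigma)}$. -/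

import Mathlib

open MeasureTheory Metric ENNReal

/-- The Wolff potential `W_{1,p}σ(x) = ∫₀^∞ (σ(B(x,r))/r^{n-p})^{1/(p-1)} dr/r`. -/
noncomputable def wolff (n : ℕ) (p : ℝ) (σ : Measure (EuclideanSpace ℝ (Fin n)))
    (x : EuclideanSpace ℝ (Fin n)) : ℝ≥0∞ :=
  ∫⁻ r in Set.Ioi (0 : ℝ),
    (σ (ball x r) / ENNReal.ofReal (r ^ ((n : ℝ) - p))) ^ (1 / (p - 1)) / ENNReal.ofReal r

/-- The support of a measure: points all of whose neighborhoods have positive measure. -/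
def measureSupport {n : ℕ} (σ : Measure (EuclideanSpace ℝ (Fin n))) :
    Set (EuclideanSpace ℝ (Fin n)) :=
  {x | ∀ r : ℝ, 0 < r → 0 < σ (ball x r)}

section WolffAux

variable {n : ℕ} {p : ℝ}

lemma WolffAux.Fmono {m m' b c : ℝ≥0∞} {e : ℝ} (he : 0 ≤ e) (h : m ≤ m') :
    (m / b) ^ e / c ≤ (m' / b) ^ e / c := by gcongr

/-- The integrand of the Wolff potential at radius `r`. -/
noncomputable def wint (n : ℕ) (p : ℝ) (σ : Measure (EuclideanSpace ℝ (Fin n)))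
    (x : EuclideanSpace ℝ (Fin n)) (r : ℝ) : ℝ≥0∞ :=
  (σ (ball x r) / ENNReal.ofReal (r ^ ((n : ℝ) - p))) ^ (1 / (p - 1)) / ENNReal.ofReal r

/-- A lower approximation to the Wolff integrand, with the ball shrunk by `δ`. -/
noncomputable def wlow (n : ℕ) (p : ℝ) (σ : Measure (EuclideanSpace ℝ (Fin n)))
    (x : EuclideanSpace ℝ (Fin n)) (δ r : ℝ) : ℝ≥0∞ :=
  (σ (ball x (r - δ)) / ENNReal.ofReal (r ^ ((n : ℝ) - p))) ^ (1 / (p - 1)) / ENNReal.ofReal r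

lemma wolff_eq_wint (σ : Measure (EuclideanSpace ℝ (Fin n))) (x) :
    wolff n p σ x = ∫⁻ r in Set.Ioi (0:ℝ), wint n p σ x r := rfl

lemma WolffAux.hepos (hp : 1 < p) : (0:ℝ) < 1 / (p - 1) := by
  apply div_pos one_pos; linarith

lemma wint_measurable (σ : Measure (EuclideanSpace ℝ (Fin n))) (x) :
    Measurable (wint n p σ x) := by
  have h1 : Monotone (fun r : ℝ => σ (ball x r)) := fun a b hab =>
    measure_mono (ball_subset_ball hab)
  exact (((h1.measurable.div (ENNReal.measurable_ofReal.comp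
      (measurable_id.pow measurable_const))).pow measurable_const)).div
      ENNReal.measurable_ofReal

lemma support_compl_null (σ : Measure (EuclideanSpace ℝ (Fin n))) :
    σ (measureSupport σ)ᶜ = 0 := by
  apply measure_null_of_locally_null
  intro x hx
  simp only [measureSupport, Set.mem_compl_iff, Set.mem_setOf_eq, not_forall] at hx
  obtain ⟨r, hr, hzero⟩ := hx
  push_neg at hzero
  exact ⟨ball x r, mem_nhdsWithin_of_mem_nhds (ball_mem_nhds x hr),
    le_antisymm hzero zero_le⟩

lemma support_closed (σ : Measure (EuclideanSpace ℝ (Fin n))) :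
    IsClosed (measureSupport σ) := by
  rw [← isOpen_compl_iff, isOpen_iff]
  intro x hx
  simp only [measureSupport, Set.mem_compl_iff, Set.mem_setOf_eq, not_forall] at hx
  obtain ⟨r, hr, hzero⟩ := hx
  push_neg at hzero
  refine ⟨r/2, by linarith, fun y hy => ?_⟩
  simp only [measureSupport, Set.mem_compl_iff, Set.mem_setOf_eq, not_forall]
  refine ⟨r/2, by linarith, ?_⟩
  push_neg
  refine le_trans (measure_mono (fun z hz => ?_)) hzero
  have := mem_ball.mp hy
  have := mem_ball.mp hz
  rw [mem_ball]
  calc dist z x ≤ dist z y + dist y x := dist_triangle z y x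
    _ < r/2 + r/2 := by linarith
    _ = r := by ring

lemma exists_support_mem {σ : Measure (EuclideanSpace ℝ (Fin n))} {x} {r : ℝ}
    (h : 0 < σ (ball x r)) : ∃ z ∈ measureSupport σ, z ∈ ball x r := by
  by_contra hc
  push_neg at hc
  have hsub : ball x r ⊆ (measureSupport σ)ᶜ := fun z hz hz' => hc z hz' hz
  have := le_trans (measure_mono hsub) (support_compl_null σ).le
  exact absurd (le_antisymm this zero_le) h.ne'

lemma wint_zero (hp : 1 < p) {σ : Measure (EuclideanSpace ℝ (Fin n))} {x} {r : ℝ}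
    (h : σ (ball x r) = 0) : wint n p σ x r = 0 := by
  have he : 0 < 1 / (p - 1) := WolffAux.hepos hp
  simp [wint, h, ENNReal.zero_rpow_of_pos he]
  linarith

lemma wint_le_scale (hp : 1 < p) {σ : Measure (EuclideanSpace ℝ (Fin n))} {x y} {r : ℝ}
    (hr : 0 < r) (hsub : ball x r ⊆ ball y (2*r)) :
    wint n p σ x r ≤
      ENNReal.ofReal 2 * (ENNReal.ofReal (2 ^ ((n:ℝ) - p))) ^ (1/(p-1)) *
        wint n p σ y (2*r) := by
  set e := 1 / (p - 1) with he
  have he0 : (0:ℝ) ≤ e := (WolffAux.hepos hp).le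
  set c2 : ℝ≥0∞ := ENNReal.ofReal (2 ^ ((n:ℝ) - p)) with hc2
  have hc2pos : c2 ≠ 0 := by
    rw [hc2, ne_eq, ENNReal.ofReal_eq_zero, not_le]
    exact Real.rpow_pos_of_pos (by norm_num) _
  have hc2top : c2 ≠ ⊤ := ENNReal.ofReal_ne_top
  have h2 : (ENNReal.ofReal 2 : ℝ≥0∞) ≠ 0 := by simp
  have h2t : (ENNReal.ofReal 2 : ℝ≥0∞) ≠ ⊤ := ENNReal.ofReal_ne_top
  have h2r : ENNReal.ofReal (2*r) = ENNReal.ofReal 2 * ENNReal.ofReal r :=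
    ENNReal.ofReal_mul (by norm_num)
  have hb : ENNReal.ofReal ((2*r) ^ ((n:ℝ) - p)) = c2 * ENNReal.ofReal (r ^ ((n:ℝ) - p)) := by
    rw [hc2, ← ENNReal.ofReal_mul (by positivity), ← Real.mul_rpow (by norm_num) hr.le]
  set A := σ (ball y (2*r))
  set b := ENNReal.ofReal (r ^ ((n:ℝ) - p))
  have key : ENNReal.ofReal 2 * c2 ^ e * wint n p σ y (2*r) = (A / b) ^ e / ENNReal.ofReal r := by
    calc ENNReal.ofReal 2 * c2 ^ e * wint n p σ y (2*r)
        = ENNReal.ofReal 2 * c2 ^ e * ((A / (c2 * b)) ^ e / (ENNReal.ofReal 2 * ENNReal.ofReal r)) := by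
          rw [wint, hb, h2r]
      _ = ENNReal.ofReal 2 * (c2 * (A / (c2 * b))) ^ e / (ENNReal.ofReal 2 * ENNReal.ofReal r) := by
          rw [mul_assoc, ← mul_div_assoc, ← ENNReal.mul_rpow_of_nonneg _ _ he0, ← mul_div_assoc]
      _ = ENNReal.ofReal 2 * ((A / b) ^ e) / (ENNReal.ofReal 2 * ENNReal.ofReal r) := by
          have hinner : c2 * (A / (c2 * b)) = A / b := by
            rw [← mul_div_assoc, ENNReal.mul_div_mul_left _ _ hc2pos hc2top]
          rw [hinner]
      _ = (A / b) ^ e / ENNReal.ofReal r := ENNReal.mul_div_mul_left _ _ h2 h2t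
  rw [key, wint]
  gcongr
  exact measure_mono hsub

lemma lintegral_Ioi_two_mul (f : ℝ → ℝ≥0∞) :
    (∫⁻ r in Set.Ioi (0:ℝ), f (2*r)) = ENNReal.ofReal 2⁻¹ * ∫⁻ s in Set.Ioi (0:ℝ), f s := by
  have hemb : MeasurableEmbedding (fun r : ℝ => 2 * r) :=
    (Homeomorph.mulLeft₀ (2:ℝ) two_ne_zero).measurableEmbedding
  have hpre : (fun r : ℝ => 2 * r) ⁻¹' Set.Ioi 0 = Set.Ioi 0 := by
    ext r; simp [Set.mem_Ioi]
  calc (∫⁻ r in Set.Ioi (0:ℝ), f (2*r))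
      = ∫⁻ s, f s ∂(Measure.map (fun r : ℝ => 2 * r) (volume.restrict ((fun r : ℝ => 2*r) ⁻¹' Set.Ioi 0))) := by
        rw [hemb.lintegral_map, hpre]
    _ = ∫⁻ s, f s ∂((Measure.map (fun r : ℝ => 2 * r) volume).restrict (Set.Ioi 0)) := by
        rw [Measure.restrict_map hemb.measurable measurableSet_Ioi]
    _ = ENNReal.ofReal 2⁻¹ * ∫⁻ s in Set.Ioi (0:ℝ), f s := by
        rw [Real.map_volume_mul_left two_ne_zero]
        simp [Measure.restrict_smul, lintegral_smul_measure, abs_of_nonneg]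

lemma wolff_part1 (hp : 1 < p) (σ : Measure (EuclideanSpace ℝ (Fin n))) (x) :
    (∫⁻ r in Set.Ioi (0:ℝ), wint n p σ x r) ≤
      (ENNReal.ofReal (2 ^ ((n:ℝ) - p))) ^ (1/(p-1)) *
        ⨆ y ∈ measureSupport σ, ∫⁻ r in Set.Ioi (0:ℝ), wint n p σ y r := by
  set c2e : ℝ≥0∞ := (ENNReal.ofReal (2 ^ ((n:ℝ) - p))) ^ (1/(p-1)) with hc2e
  rcases Set.eq_empty_or_nonempty (measureSupport σ) with hS | hS
  · have hz : ∀ r : ℝ, σ (ball x r) = 0 := by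
      intro r
      have : σ Set.univ = 0 := by
        have := support_compl_null σ
        rwa [hS, Set.compl_empty] at this
      exact le_antisymm (le_trans (measure_mono (Set.subset_univ _)) this.le) zero_le
    have : ∀ r : ℝ, wint n p σ x r = 0 := fun r => wint_zero hp (hz r)
    simp only [this, lintegral_zero]
    exact zero_le
  · obtain ⟨y, hyS, hyd⟩ := (support_closed σ).exists_infDist_eq_dist hS x
    have hsub : ∀ r : ℝ, 0 < r → 0 < σ (ball x r) → ball x r ⊆ ball y (2*r) := by
      intro r hr hpos z hz
      obtain ⟨w, hwS, hw⟩ := exists_support_mem hpos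
      have h1 : infDist x (measureSupport σ) ≤ dist x w := infDist_le_dist_of_mem hwS
      have h2 : dist x w < r := by rwa [dist_comm, ← mem_ball]
      have h3 : dist x y < r := by rw [← hyd]; linarith
      have h4 : dist z x < r := mem_ball.mp hz
      rw [mem_ball]
      calc dist z y ≤ dist z x + dist x y := dist_triangle z x y
        _ < 2*r := by linarith
    have hpt : ∀ r ∈ Set.Ioi (0:ℝ), wint n p σ x r ≤
        ENNReal.ofReal 2 * c2e * wint n p σ y (2*r) := by
      intro r hr
      rcases eq_or_lt_of_le (zero_le : 0 ≤ σ (ball x r)) with h0 | hpos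
      · rw [wint_zero hp h0.symm]; exact zero_le
      · exact wint_le_scale hp hr (hsub r hr hpos)
    calc (∫⁻ r in Set.Ioi (0:ℝ), wint n p σ x r)
        ≤ ∫⁻ r in Set.Ioi (0:ℝ), ENNReal.ofReal 2 * c2e * wint n p σ y (2*r) := by
          apply setLIntegral_mono
          · exact (measurable_const.mul ((wint_measurable σ y).comp
              (measurable_const_mul 2)))
          · exact hpt
      _ = ENNReal.ofReal 2 * c2e * ∫⁻ r in Set.Ioi (0:ℝ), wint n p σ y (2*r) := by
          exact lintegral_const_mul _ (((wint_measurable σ y).comp (measurable_const_mul 2)) :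
            Measurable fun r : ℝ => wint n p σ y (2*r))
      _ = ENNReal.ofReal 2 * c2e * (ENNReal.ofReal 2⁻¹ * ∫⁻ s in Set.Ioi (0:ℝ), wint n p σ y s) := by
          rw [lintegral_Ioi_two_mul (wint n p σ y)]
      _ = c2e * ∫⁻ s in Set.Ioi (0:ℝ), wint n p σ y s := by
          rw [show ENNReal.ofReal 2 * c2e * (ENNReal.ofReal 2⁻¹ * ∫⁻ s in Set.Ioi (0:ℝ), wint n p σ y s)
              = (ENNReal.ofReal 2 * ENNReal.ofReal 2⁻¹) * (c2e * ∫⁻ s in Set.Ioi (0:ℝ), wint n p σ y s) by ring]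
          rw [← ENNReal.ofReal_mul (by norm_num)]
          norm_num
      _ ≤ c2e * ⨆ y ∈ measureSupport σ, ∫⁻ r in Set.Ioi (0:ℝ), wint n p σ y r := by
          gcongr
          exact le_biSup (fun y => ∫⁻ r in Set.Ioi (0:ℝ), wint n p σ y r) hyS

lemma wlow_le_wint (hp : 1 < p) {σ : Measure (EuclideanSpace ℝ (Fin n))} {x x'} {δ : ℝ}
    (hd : dist x' x < δ) (r : ℝ) : wlow n p σ x δ r ≤ wint n p σ x' r := by
  have hsub : ball x (r - δ) ⊆ ball x' r := by
    intro z hz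
    have h1 : dist z x < r - δ := mem_ball.mp hz
    rw [mem_ball]
    calc dist z x' ≤ dist z x + dist x x' := dist_triangle z x x'
      _ < (r - δ) + δ := by rw [dist_comm x x']; exact add_lt_add h1 hd
      _ = r := by ring
  exact WolffAux.Fmono (WolffAux.hepos hp).le (measure_mono hsub)

lemma one_div_natSucc_antitone : Antitone (fun k : ℕ => 1/((k:ℝ)+1)) := by
  intro k l hkl
  have hk : (k:ℝ) ≤ l := Nat.cast_le.mpr hkl
  apply one_div_le_one_div_of_le (by positivity)
  linarith

lemma wlow_iSup (hp : 1 < p) (σ : Measure (EuclideanSpace ℝ (Fin n))) (x) :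
    (⨆ k : ℕ, ∫⁻ r in Set.Ioi (0:ℝ), wlow n p σ x (1/(k+1)) r) =
      ∫⁻ r in Set.Ioi (0:ℝ), wint n p σ x r := by
  have hmeas : ∀ k : ℕ, Measurable (wlow n p σ x (1/(k+1))) := by
    intro k
    have h1 : Monotone (fun r : ℝ => σ (ball x (r - 1/(k+1)))) := fun a b hab =>
      measure_mono (ball_subset_ball (by linarith))
    exact ((h1.measurable.div (ENNReal.measurable_ofReal.comp
      (measurable_id.pow measurable_const))).pow measurable_const).div ENNReal.measurable_ofReal
  have hmono : Monotone (fun k : ℕ => wlow n p σ x (1/(k+1))) := by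
    intro k l hkl r
    exact WolffAux.Fmono (WolffAux.hepos hp).le (measure_mono (ball_subset_ball
      (by linarith [one_div_natSucc_antitone hkl])))
  rw [← lintegral_iSup hmeas hmono]
  apply setLIntegral_congr_fun measurableSet_Ioi
  intro r hr
  have hr0 : (0:ℝ) < r := hr
  set e := 1 / (p - 1) with he
  have he0 : (0:ℝ) < e := WolffAux.hepos hp
  set b := ENNReal.ofReal (r ^ ((n : ℝ) - p)) with hbdef
  have hb0 : b ≠ 0 := by
    rw [hbdef, ne_eq, ENNReal.ofReal_eq_zero, not_le]
    exact Real.rpow_pos_of_pos hr0 _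
  have hc0 : ENNReal.ofReal r ≠ 0 := by
    rw [ne_eq, ENNReal.ofReal_eq_zero, not_le]; exact hr0
  set F := fun m : ℝ≥0∞ => (m / b) ^ e / ENNReal.ofReal r with hF
  have hFc : Continuous F := by
    rw [hF]
    simp only [div_eq_mul_inv]
    exact (ENNReal.continuous_mul_const (ENNReal.inv_ne_top.mpr hc0)).comp
      (ENNReal.continuous_rpow_const.comp
        (ENNReal.continuous_mul_const (ENNReal.inv_ne_top.mpr hb0)))
  have hFm : Monotone F := fun a a' haa' => WolffAux.Fmono he0.le haa'
  have hFbot : F 0 = 0 := by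
    rw [hF]
    simp [ENNReal.zero_rpow_of_pos he0]
  have hdir : Monotone (fun k : ℕ => ball x (r - 1/(k+1))) := fun k l hkl =>
    ball_subset_ball (by linarith [one_div_natSucc_antitone hkl])
  have hball : (⋃ k : ℕ, ball x (r - 1/(k+1))) = ball x r := by
    apply Set.Subset.antisymm
    · exact Set.iUnion_subset fun k => ball_subset_ball
        (by linarith [(by positivity : (0:ℝ) < 1/((k:ℝ)+1))])
    · intro z hz
      obtain ⟨k, hk⟩ := exists_nat_one_div_lt (sub_pos.mpr (mem_ball.mp hz))
      exact Set.mem_iUnion.mpr ⟨k, mem_ball.mpr (by linarith [mem_ball.mp hz])⟩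
  have hmsup : (⨆ k : ℕ, σ (ball x (r - 1/(k+1)))) = σ (ball x r) := by
    rw [← hball]
    exact (hdir.directed_le.measure_iUnion).symm
  calc (⨆ k : ℕ, wlow n p σ x (1/(k+1)) r)
      = ⨆ k : ℕ, F (σ (ball x (r - 1/(k+1)))) := rfl
    _ = F (⨆ k : ℕ, σ (ball x (r - 1/(k+1)))) :=
        (hFm.map_iSup_of_continuousAt hFc.continuousAt hFbot).symm
    _ = wint n p σ x r := by rw [hmsup]; rfl

lemma wolff_part2 (hp : 1 < p) (σ : Measure (EuclideanSpace ℝ (Fin n))) :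
    (⨆ y ∈ measureSupport σ, ∫⁻ r in Set.Ioi (0:ℝ), wint n p σ y r) =
      essSup (fun x => ∫⁻ r in Set.Ioi (0:ℝ), wint n p σ x r) σ := by
  set W := fun x => ∫⁻ r in Set.Ioi (0:ℝ), wint n p σ x r with hW
  apply le_antisymm
  · apply iSup₂_le
    intro y hyS
    by_contra hc
    push_neg at hc
    have : essSup W σ < ⨆ k : ℕ, ∫⁻ r in Set.Ioi (0:ℝ), wlow n p σ y (1/(k+1)) r := by
      rw [wlow_iSup hp σ y]; exact hc
    obtain ⟨k, hk⟩ := lt_iSup_iff.mp this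
    set δ : ℝ := 1/(k+1) with hδ
    have hδ0 : 0 < δ := by positivity
    have hball_sub : ball y δ ⊆ {x' | essSup W σ < W x'} := by
      intro x' hx'
      have hle : (∫⁻ r in Set.Ioi (0:ℝ), wlow n p σ y δ r) ≤ W x' :=
        lintegral_mono fun r => wlow_le_wint hp (mem_ball.mp hx') r
      exact lt_of_lt_of_le hk hle
    have hnull : σ {x' | essSup W σ < W x'} = 0 := by
      have := ENNReal.ae_le_essSup (μ := σ) W
      rw [Filter.eventually_iff, mem_ae_iff] at this
      convert this using 2
      ext z; simp [not_le]
    have hpos := hyS δ hδ0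
    rw [le_antisymm (le_trans (measure_mono hball_sub) hnull.le) zero_le] at hpos
    exact lt_irrefl _ hpos
  · apply essSup_le_of_ae_le (hfbdd := by isBoundedDefault)
    have hae : ∀ᵐ x ∂σ, x ∈ measureSupport σ := by
      rw [Filter.eventually_iff, mem_ae_iff]
      exact support_compl_null σ
    filter_upwards [hae] with x hx
    exact le_biSup (fun y => ∫⁻ r in Set.Ioi (0:ℝ), wint n p σ y r) hx

end WolffAux

/-- Weak maximum principle for Wolff potentials:
`W_{1,p}σ(x) ≤ c sup_{supp σ} W_{1,p}σ` for all `x`, with `c = c(n,p)`; moreover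
`sup_{supp σ} W_{1,p}σ = ‖W_{1,p}σ‖_{L^∞(dσ)}`. -/
theorem wolff_weak_maximum_principle (n : ℕ) (p : ℝ) (hp : 1 < p) :
    (∃ c : ℝ≥0∞, 0 < c ∧ c < ⊤ ∧
      ∀ (σ : Measure (EuclideanSpace ℝ (Fin n))) (x : EuclideanSpace ℝ (Fin n)),
        wolff n p σ x ≤ c * ⨆ y ∈ measureSupport σ, wolff n p σ y) ∧
    (∀ σ : Measure (EuclideanSpace ℝ (Fin n)),
      (⨆ y ∈ measureSupport σ, wolff n p σ y) = essSup (wolff n p σ) σ) := by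
  constructor
  · refine ⟨(ENNReal.ofReal (2 ^ ((n:ℝ) - p))) ^ (1/(p-1)), ?_, ?_, ?_⟩
    · exact ENNReal.rpow_pos (ENNReal.ofReal_pos.mpr (Real.rpow_pos_of_pos (by norm_num) _))
        ENNReal.ofReal_ne_top
    · exact ENNReal.rpow_lt_top_of_nonneg (WolffAux.hepos hp).le ENNReal.ofReal_ne_top
    · intro σ x
      have := wolff_part1 hp σ x
      simpa only [← wolff_eq_wint] using this
  · intro σ
    have := wolff_part2 hp σ
    simpa only [← wolff_eq_wint] using this
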